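/- Let K be a number field and let q ∈ K be a primitive root of unity of order κ ≥ 1. Let μ ≥ 1, let A(x) be a μ×μ matrix with entries in K(x) which is invertible over K(x), and set A_κ(x) = A(x)·A(qx)·⋯·A(q^{κ−1}x). Then there exists a μ×μ matrix F(x) with entries in K(x), invertible over K(x), such that F(x) = A(x)·F(qx) (i.e. the associated q-difference module is trivial over K(x)) if and only if |A_κ(x) − I_μ|_{v,Gauss} < 1 for infinitely many finite places v of K. -/

import Mathlib

open NumberField IsDedekindDomain
open scoped Multiplicative Classical

noncomputable section

variable {K : Type*} [Field K]

/-- The substitution `x ↦ qx` on rational functions. -/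
def ratSubst (q : K) (f : RatFunc K) : RatFunc K :=
  algebraMap (Polynomial K) (RatFunc K) (f.num.comp (Polynomial.C q * Polynomial.X)) /
    algebraMap (Polynomial K) (RatFunc K) (f.denom.comp (Polynomial.C q * Polynomial.X))

/-- `A_m(x) = A(x) · A(qx) · ⋯ · A(q^{m-1} x)`. -/
def Aiter {μ : ℕ} (q : K) (A : Matrix (Fin μ) (Fin μ) (RatFunc K)) :
    ℕ → Matrix (Fin μ) (Fin μ) (RatFunc K)
  | 0 => 1
  | m + 1 => Aiter q A m * A.map (fun g => (ratSubst q)^[m] g)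

open scoped nonZeroDivisors

namespace QAux

open Polynomial

def compHom (q : K) : Polynomial K →+* Polynomial K :=
  Polynomial.eval₂RingHom Polynomial.C (Polynomial.C q * Polynomial.X)

lemma compHom_apply (q : K) (P : K[X]) :
    compHom q P = P.comp (Polynomial.C q * Polynomial.X) := rfl

lemma compHom_compHom (q r : K) (P : K[X]) :
    compHom q (compHom r P) = compHom (r * q) P := by
  simp only [compHom_apply]
  rw [Polynomial.comp_assoc]
  congr 1
  rw [Polynomial.mul_comp, Polynomial.C_comp, Polynomial.X_comp, ← mul_assoc, ← Polynomial.C_mul]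

lemma compHom_one (P : K[X]) : compHom (1 : K) P = P := by
  simp [compHom_apply]

lemma compHom_injective {q : K} (hq : q ≠ 0) : Function.Injective (compHom (K := K) q) := by
  intro P Q h
  have h2 := congrArg (compHom q⁻¹) h
  rwa [compHom_compHom, compHom_compHom, mul_inv_cancel₀ hq, compHom_one, compHom_one] at h2

lemma compHom_le {q : K} (hq : q ≠ 0) :
    (Polynomial K)⁰ ≤ (Polynomial K)⁰.comap (compHom q) := by
  intro P hP
  rw [mem_nonZeroDivisors_iff_ne_zero] at hP
  refine Submonoid.mem_comap.mpr (mem_nonZeroDivisors_iff_ne_zero.mpr fun h => hP ?_)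
  exact compHom_injective hq (by simpa using h)

def rsHom (q : K) (hq : q ≠ 0) : RatFunc K →+* RatFunc K :=
  RatFunc.mapRingHom (compHom q) (compHom_le hq)

lemma ratSubst_eq {q : K} (hq : q ≠ 0) (f : RatFunc K) :
    ratSubst q f = rsHom q hq f := by
  rw [rsHom]
  rw [show ((RatFunc.mapRingHom (compHom q) (compHom_le hq)) f : RatFunc K)
      = RatFunc.map (compHom q) (compHom_le hq) f from rfl]
  rw [RatFunc.map_apply]
  rfl

lemma rsHom_algebraMap {q : K} (hq : q ≠ 0) (P : K[X]) :
    rsHom q hq (algebraMap _ _ P) = algebraMap _ _ (compHom q P) := by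
  rw [← ratSubst_eq hq]
  rw [ratSubst, RatFunc.num_algebraMap, RatFunc.denom_algebraMap, Polynomial.one_comp, map_one,
    div_one]
  rfl

lemma rsHom_comp {q r : K} (hq : q ≠ 0) (hr : r ≠ 0) :
    (rsHom (K := K) q hq).comp (rsHom r hr) = rsHom (r * q) (mul_ne_zero hr hq) := by
  refine IsLocalization.ringHom_ext (nonZeroDivisors (Polynomial K))
    (RingHom.ext fun P => ?_)
  simp only [RingHom.comp_apply, RingHom.coe_comp, Function.comp_apply, rsHom_algebraMap,
    compHom_compHom]

lemma ratSubst_ratSubst {q r : K} (hq : q ≠ 0) (hr : r ≠ 0) (f : RatFunc K) :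
    ratSubst q (ratSubst r f) = ratSubst (r * q) f := by
  rw [ratSubst_eq hq, ratSubst_eq hr, ratSubst_eq (mul_ne_zero hr hq),
    ← RingHom.comp_apply, rsHom_comp]

lemma ratSubst_one (f : RatFunc K) : ratSubst (1 : K) f = f := by
  rw [ratSubst]
  simp only [Polynomial.C_1, one_mul, Polynomial.comp_X]
  exact RatFunc.num_div_denom f

lemma ratSubst_iterate {q : K} (hq : q ≠ 0) (m : ℕ) (f : RatFunc K) :
    (ratSubst q)^[m] f = ratSubst (q ^ m) f := by
  induction m with
  | zero => simp [ratSubst_one]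
  | succ m ih =>
      rw [Function.iterate_succ_apply', ih, ratSubst_ratSubst hq (pow_ne_zero m hq), ← pow_succ]

lemma ratSubst_X {q : K} (hq : q ≠ 0) :
    ratSubst q (RatFunc.X (K := K)) = algebraMap _ _ (Polynomial.C q * Polynomial.X) := by
  rw [show (RatFunc.X (K := K)) = algebraMap K[X] (RatFunc K) Polynomial.X from rfl,
    ratSubst_eq hq, rsHom_algebraMap hq, compHom_apply, Polynomial.X_comp]

end QAux

namespace QAux4

open QAux Finset

variable {K : Type*} [Field K] {q : K}

lemma ratSubst_zero (hq : q ≠ 0) : ratSubst q (0 : RatFunc K) = 0 := by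
  rw [ratSubst_eq hq]; exact map_zero _

lemma ratSubst_one' (hq : q ≠ 0) : ratSubst q (1 : RatFunc K) = 1 := by
  rw [ratSubst_eq hq]; exact map_one _

lemma map_ratSubst_eq (hq : q ≠ 0) {μ : ℕ} (M : Matrix (Fin μ) (Fin μ) (RatFunc K)) :
    M.map (ratSubst q) = M.map (rsHom q hq) := by
  ext i j; simp [Matrix.map_apply, ratSubst_eq hq]

lemma map_iter_eq (hq : q ≠ 0) {μ : ℕ} (m : ℕ) (M : Matrix (Fin μ) (Fin μ) (RatFunc K)) :
    M.map (fun g => (ratSubst q)^[m] g)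
      = M.map (rsHom (q ^ m) (pow_ne_zero m hq)) := by
  ext i j; simp [Matrix.map_apply, ratSubst_iterate hq, ratSubst_eq (pow_ne_zero m hq)]

lemma matMap_mul (hq : q ≠ 0) {μ : ℕ} (M N : Matrix (Fin μ) (Fin μ) (RatFunc K)) :
    (M * N).map (ratSubst q) = M.map (ratSubst q) * N.map (ratSubst q) := by
  rw [map_ratSubst_eq hq, map_ratSubst_eq hq, map_ratSubst_eq hq]
  exact Matrix.map_mul

lemma matMap_iter_mul (hq : q ≠ 0) {μ : ℕ} (m : ℕ) (M N : Matrix (Fin μ) (Fin μ) (RatFunc K)) :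
    (M * N).map (fun g => (ratSubst q)^[m] g)
      = M.map (fun g => (ratSubst q)^[m] g) * N.map (fun g => (ratSubst q)^[m] g) := by
  rw [map_iter_eq hq, map_iter_eq hq, map_iter_eq hq]
  exact Matrix.map_mul

lemma Aiter_succ' (hq : q ≠ 0) {μ : ℕ} (A : Matrix (Fin μ) (Fin μ) (RatFunc K)) (m : ℕ) :
    Aiter q A (m + 1) = A * (Aiter q A m).map (ratSubst q) := by
  induction m with
  | zero =>
      show Aiter q A 0 * A.map (fun g => (ratSubst q)^[0] g)
          = A * (Aiter q A 0).map (ratSubst q)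
      have h1 : A.map (fun g => (ratSubst q)^[0] g) = A := by
        ext i j; simp [Matrix.map_apply]
      have h2 : (Aiter q A 0).map (ratSubst q) = 1 := by
        show (1 : Matrix (Fin μ) (Fin μ) (RatFunc K)).map (ratSubst q) = 1
        exact Matrix.map_one _ (ratSubst_zero hq) (ratSubst_one' hq)
      rw [h1, h2]
      show (1 : Matrix (Fin μ) (Fin μ) (RatFunc K)) * A = A * 1
      rw [one_mul, mul_one]
  | succ m ih =>
      show Aiter q A (m + 1) * A.map (fun g => (ratSubst q)^[m+1] g)
          = A * (Aiter q A (m + 1)).map (ratSubst q)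
      conv_rhs => rw [show Aiter q A (m + 1)
        = Aiter q A m * A.map (fun g => (ratSubst q)^[m] g) from rfl]
      rw [matMap_mul hq, ih, Matrix.map_map]
      have h3 : (A.map (ratSubst q ∘ fun g => (ratSubst q)^[m] g))
          = A.map (fun g => (ratSubst q)^[m+1] g) := by
        ext i j
        simp [Matrix.map_apply, Function.iterate_succ_apply']
      rw [h3, mul_assoc]

lemma F_iter (hq : q ≠ 0) {μ : ℕ} {A F : Matrix (Fin μ) (Fin μ) (RatFunc K)}
    (hF : F = A * F.map (ratSubst q)) (m : ℕ) :
    F = Aiter q A m * F.map (fun g => (ratSubst q)^[m] g) := by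
  induction m with
  | zero =>
      have h1 : F.map (fun g => (ratSubst q)^[0] g) = F := by
        ext i j; simp [Matrix.map_apply]
      rw [h1]
      show F = (1 : Matrix (Fin μ) (Fin μ) (RatFunc K)) * F
      rw [one_mul]
  | succ m ih =>
      calc F = Aiter q A m * F.map (fun g => (ratSubst q)^[m] g) := ih
        _ = Aiter q A m * (A * F.map (ratSubst q)).map (fun g => (ratSubst q)^[m] g) := by
            rw [← hF]
        _ = Aiter q A m * (A.map (fun g => (ratSubst q)^[m] g)
              * (F.map (ratSubst q)).map (fun g => (ratSubst q)^[m] g)) := by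
            rw [matMap_iter_mul hq]
        _ = Aiter q A m * (A.map (fun g => (ratSubst q)^[m] g)
              * F.map (fun g => (ratSubst q)^[m+1] g)) := by
            rw [Matrix.map_map]
            congr 1
        _ = Aiter q A (m + 1) * F.map (fun g => (ratSubst q)^[m+1] g) := by
            rw [show Aiter q A (m + 1)
              = Aiter q A m * A.map (fun g => (ratSubst q)^[m] g) from rfl, mul_assoc]

lemma Aiter_eq_one_of_triv {κ : ℕ} (hq : q ≠ 0) (hqκ : q ^ κ = 1) {μ : ℕ}
    {A F : Matrix (Fin μ) (Fin μ) (RatFunc K)} (hFu : IsUnit F)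
    (hF : F = A * F.map (ratSubst q)) :
    Aiter q A κ = 1 := by
  have h1 := F_iter hq hF κ
  have h2 : F.map (fun g => (ratSubst q)^[κ] g) = F := by
    ext i j
    simp only [Matrix.map_apply]
    rw [ratSubst_iterate hq, hqκ, ratSubst_one]
  rw [h2] at h1
  obtain ⟨u, rfl⟩ := hFu
  calc Aiter q A κ = Aiter q A κ * ((u : Matrix (Fin μ) (Fin μ) (RatFunc K)) * ↑u⁻¹) := by
        rw [u.mul_inv, mul_one]
    _ = (Aiter q A κ * (u : Matrix (Fin μ) (Fin μ) (RatFunc K))) * ↑u⁻¹ := (mul_assoc _ _ _).symm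
    _ = (u : Matrix (Fin μ) (Fin μ) (RatFunc K)) * ↑u⁻¹ := by rw [← h1]
    _ = 1 := u.mul_inv

end QAux4

namespace QAux5

open QAux QAux4 Finset

variable {K : Type*} [Field K]

lemma sum_shift {M : Type*} [AddCommMonoid M] (G : ℕ → M) (κ : ℕ) (hG : G κ = G 0) :
    ∑ m ∈ Finset.range κ, G (m + 1) = ∑ m ∈ Finset.range κ, G m := by
  cases κ with
  | zero => simp
  | succ n =>
      rw [Finset.sum_range_succ, Finset.sum_range_succ' G, hG]

set_option maxHeartbeats 1000000 in
set_option synthInstance.maxHeartbeats 1000000 in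
lemma exists_F {q : K} (κ : ℕ) (hκpos : 0 < κ) (hq : q ≠ 0) (hqκ : q ^ κ = 1)
    (hqmin : ∀ m : ℕ, 0 < m → m < κ → q ^ m ≠ 1) {μ : ℕ}
    (A : Matrix (Fin μ) (Fin μ) (RatFunc K))
    (hAκ : Aiter q A κ = 1) :
    ∃ F : Matrix (Fin μ) (Fin μ) (RatFunc K),
      IsUnit F ∧ F = A * F.map (ratSubst q) := by
  classical
  set σp : ℕ → ((RatFunc K) →+* (RatFunc K)) := fun m => rsHom (q ^ m) (pow_ne_zero m hq) with hσp
  have hσp0 : ∀ c : (RatFunc K), σp 0 c = c := by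
    intro c
    rw [hσp]
    simp only []
    rw [← ratSubst_eq (pow_ne_zero 0 hq), pow_zero, ratSubst_one]
  have hσpκ : ∀ c : (RatFunc K), σp κ c = c := by
    intro c
    rw [hσp]
    simp only []
    rw [← ratSubst_eq (pow_ne_zero κ hq), hqκ, ratSubst_one]
  have hstep : ∀ (m : ℕ) (c : (RatFunc K)), rsHom q hq (σp m c) = σp (m + 1) c := by
    intro m c
    rw [hσp]
    simp only []
    rw [← ratSubst_eq hq, ← ratSubst_eq (pow_ne_zero m hq),
      ← ratSubst_eq (pow_ne_zero (m+1) hq), ratSubst_ratSubst hq (pow_ne_zero m hq), ← pow_succ]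
  -- the candidate generating vectors
  set w : (RatFunc K) → Fin μ → (Fin μ → RatFunc K) := fun c i r => ∑ m ∈ Finset.range κ, σp m c * Aiter q A m r i with hw
  set S : Set (Fin μ → RatFunc K) := {x | ∃ c i, x = w c i} with hS
  -- the span of S is everything
  have hspan : Submodule.span (RatFunc K) S = ⊤ := by
    by_contra hne
    obtain ⟨f, hf0, hfbot⟩ :=
      (Submodule.span (RatFunc K) S).exists_dual_map_eq_bot_of_lt_top (Ne.lt_top hne) inferInstance
    have hvanish : ∀ x ∈ S, f x = 0 := by
      intro x hx
      have h1 : f x ∈ (Submodule.span (RatFunc K) S).map f :=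
        Submodule.mem_map_of_mem (Submodule.subset_span hx)
      rw [hfbot] at h1
      exact (Submodule.mem_bot (RatFunc K)).mp h1
    -- characters
    set χ : Fin κ → ((RatFunc K) →* (RatFunc K)) := fun m => (σp (m : ℕ)).toMonoidHom with hχ
    have hχc : ∀ (m : Fin κ) (c : (RatFunc K)), χ m c = σp (m : ℕ) c := fun _ _ => rfl
    have hpow_inj : ∀ m m' : Fin κ, q ^ (m : ℕ) = q ^ (m' : ℕ) → m = m' := by
      have key : ∀ m m' : Fin κ, (m : ℕ) ≤ (m' : ℕ) → q ^ (m : ℕ) = q ^ (m' : ℕ) → m = m' := by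
        intro m m' hle hpow
        by_contra hne'
        have hlt : (m : ℕ) < (m' : ℕ) := lt_of_le_of_ne hle (fun h => hne' (Fin.ext h))
        have h1 : q ^ ((m' : ℕ) - (m : ℕ)) * q ^ (m : ℕ) = q ^ (m' : ℕ) := by
          rw [← pow_add]
          congr 1
          omega
        rw [← hpow] at h1
        have h2 : q ^ ((m' : ℕ) - (m : ℕ)) = 1 := by
          have := mul_right_cancel₀ (pow_ne_zero (m : ℕ) hq)
            (h1.trans (one_mul (q ^ (m : ℕ))).symm)
          exact this
        exact hqmin _ (by omega) (by omega) h2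
      intro m m' hpow
      rcases le_total (m : ℕ) (m' : ℕ) with h | h
      · exact key m m' h hpow
      · exact (key m' m h hpow.symm).symm
    have hχinj : Function.Injective χ := by
      intro m m' h
      apply hpow_inj
      have hX := congrArg (fun (g : (RatFunc K) →* (RatFunc K)) => g (RatFunc.X : RatFunc K)) h
      simp only [hχc] at hX
      have hval : ∀ n : ℕ, σp n (RatFunc.X : RatFunc K)
          = algebraMap (Polynomial K) (RatFunc K) (Polynomial.C (q ^ n) * Polynomial.X) := by
        intro n
        rw [hσp]
        simp only []
        rw [show (RatFunc.X : RatFunc K) = algebraMap (Polynomial K) (RatFunc K) Polynomial.X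
          from (RatFunc.algebraMap_X).symm]
        rw [rsHom_algebraMap, compHom_apply, Polynomial.X_comp]
      rw [hval, hval] at hX
      have h2 := IsFractionRing.injective (Polynomial K) (RatFunc K) hX
      have h3 : (Polynomial.C (q ^ (m : ℕ)) * Polynomial.X).coeff 1
          = (Polynomial.C (q ^ (m' : ℕ)) * Polynomial.X).coeff 1 := by rw [h2]
      have h4 : ∀ n : ℕ, (Polynomial.C (q ^ n) * Polynomial.X).coeff 1 = q ^ n := by
        intro n
        rw [Polynomial.coeff_C_mul, Polynomial.coeff_X_one, mul_one]
      rw [h4, h4] at h3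
      exact h3
    have hindep : LinearIndependent (RatFunc K) (fun m : Fin κ => (χ m : (RatFunc K) → (RatFunc K))) :=
      (linearIndependent_monoidHom (RatFunc K) (RatFunc K)).comp χ hχinj
    -- each column functional vanishes
    have hcol : ∀ (i : Fin μ) (m : Fin κ), f (fun r => Aiter q A (m : ℕ) r i) = 0 := by
      intro i
      set g : Fin κ → (RatFunc K) := fun m => f (fun r => Aiter q A (m : ℕ) r i) with hg
      have hgsum : ∑ m : Fin κ, g m • (χ m : (RatFunc K) → (RatFunc K)) = 0 := by
        funext c
        have h1 : (∑ m : Fin κ, g m • (χ m : (RatFunc K) → (RatFunc K))) c = ∑ m : Fin κ, g m * χ m c := by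
          rw [Finset.sum_apply]
          simp [smul_eq_mul]
        rw [h1]
        have h2 : f (w c i) = 0 := hvanish _ ⟨c, i, rfl⟩
        have h3 : w c i = ∑ m ∈ Finset.range κ, σp m c • (fun r => Aiter q A m r i : (Fin μ → RatFunc K)) := by
          funext r
          rw [hw]
          simp only []
          rw [Finset.sum_apply]
          simp [smul_eq_mul]
        rw [h3, map_sum] at h2
        simp only [map_smul, smul_eq_mul] at h2
        have h4 : ∑ m : Fin κ, g m * χ m c
            = ∑ m ∈ Finset.range κ, σp m c * f (fun r => Aiter q A m r i) := by
          rw [← Fin.sum_univ_eq_sum_range (fun m => σp m c * f (fun r => Aiter q A m r i)) κ]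
          apply Finset.sum_congr rfl
          intro m _
          rw [hχc, hg, mul_comm]
        rw [h4]
        exact h2
      have := Fintype.linearIndependent_iff.mp hindep g hgsum
      intro m
      exact this m
    -- hence f kills the standard basis vectors
    have hstd : ∀ i : Fin μ, f (fun j => if i = j then (1 : (RatFunc K)) else 0) = 0 := by
      intro i
      have h1 := hcol i ⟨0, hκpos⟩
      have h2 : (fun r => Aiter q A ((⟨0, hκpos⟩ : Fin κ) : ℕ) r i)
          = (fun j => if i = j then (1 : (RatFunc K)) else 0) := by
        funext r
        show (1 : Matrix (Fin μ) (Fin μ) (RatFunc K)) r i = _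
        by_cases hri : i = r
        · subst hri; simp [Matrix.one_apply]
        · rw [Matrix.one_apply_ne (fun h => hri h.symm), if_neg hri]
      rw [h2] at h1
      exact h1
    apply hf0
    apply LinearMap.ext
    intro x
    rw [show x = ∑ i, (x i) • fun j => if i = j then (1 : (RatFunc K)) else 0 from pi_eq_sum_univ x,
      map_sum]
    simp only [map_smul, hstd, smul_eq_mul, mul_zero, Finset.sum_const_zero]
    rfl
  -- extract a basis from S
  obtain ⟨b, hbS, hbspan, hbind⟩ := exists_linearIndependent (RatFunc K) S
  rw [hspan] at hbspan
  have hble : ⊤ ≤ Submodule.span (RatFunc K) (Set.range ((↑) : b → (Fin μ → RatFunc K))) := by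
    rw [Subtype.range_coe]
    rw [hbspan]
  set bs : Module.Basis b (RatFunc K) (Fin μ → RatFunc K) := Module.Basis.mk hbind hble with hbs
  haveI : FiniteDimensional (RatFunc K) (Fin μ → RatFunc K) := inferInstance
  haveI : Fintype b := FiniteDimensional.fintypeBasisIndex bs
  have hcard : Fintype.card (Fin μ) = Fintype.card b := by
    rw [Fintype.card_fin]
    have h1 := Module.finrank_eq_card_basis bs
    have h2 : Module.finrank (RatFunc K) (Fin μ → RatFunc K) = μ := by
      rw [Module.finrank_pi, Fintype.card_fin]
    omega
  set e : Fin μ ≃ b := Fintype.equivOfCardEq hcard with he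
  set bs' : Module.Basis (Fin μ) (RatFunc K) (Fin μ → RatFunc K) := bs.reindex e.symm with hbs'
  have hbs'app : ∀ j : Fin μ, bs' j = ((e j : (Fin μ → RatFunc K))) := by
    intro j
    rw [hbs', Module.Basis.reindex_apply, Equiv.symm_symm, hbs, Module.Basis.mk_apply]
  set F : Matrix (Fin μ) (Fin μ) (RatFunc K) := Matrix.of (fun r j => bs' j r) with hF
  refine ⟨F, ?_, ?_⟩
  · have hFt : F = (Pi.basisFun (RatFunc K) (Fin μ)).toMatrix ⇑bs' := by
      ext r j
      rw [Module.Basis.toMatrix_apply, Pi.basisFun_repr]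
      rfl
    haveI := (Pi.basisFun (RatFunc K) (Fin μ)).invertibleToMatrix bs'
    rw [hFt]
    exact isUnit_of_invertible _
  · ext r j
    obtain ⟨c, i, hci⟩ : ∃ c i, (bs' j : (Fin μ → RatFunc K)) = w c i := by
      have := hbS (e j).2
      obtain ⟨c, i, hci⟩ := this
      exact ⟨c, i, by rw [hbs'app]; exact hci⟩
    have hFcol : ∀ s : Fin μ, F s j = ∑ m ∈ Finset.range κ, σp m c * Aiter q A m s i := by
      intro s
      show bs' j s = _
      rw [hci]
    -- left side
    have hL : F r j = ∑ m ∈ Finset.range κ, σp m c * Aiter q A m r i := hFcol r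
    -- right side
    have hR : (A * F.map (ratSubst q)) r j
        = ∑ m ∈ Finset.range κ, σp (m + 1) c * Aiter q A (m + 1) r i := by
      rw [Matrix.mul_apply]
      have h1 : ∀ s : Fin μ, (F.map (ratSubst q)) s j
          = ∑ m ∈ Finset.range κ, σp (m + 1) c * ((Aiter q A m).map (rsHom q hq)) s i := by
        intro s
        rw [Matrix.map_apply, hFcol s, ratSubst_eq hq, map_sum]
        apply Finset.sum_congr rfl
        intro m _
        rw [map_mul, hstep]
        rfl
      calc ∑ s, A r s * (F.map (ratSubst q)) s j
          = ∑ s, ∑ m ∈ Finset.range κ,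
              σp (m + 1) c * (A r s * ((Aiter q A m).map (rsHom q hq)) s i) := by
            apply Finset.sum_congr rfl
            intro s _
            rw [h1 s, Finset.mul_sum]
            apply Finset.sum_congr rfl
            intro m _
            ring
        _ = ∑ m ∈ Finset.range κ, ∑ s,
              σp (m + 1) c * (A r s * ((Aiter q A m).map (rsHom q hq)) s i) :=
            Finset.sum_comm
        _ = ∑ m ∈ Finset.range κ, σp (m + 1) c * (A * (Aiter q A m).map (rsHom q hq)) r i := by
            apply Finset.sum_congr rfl
            intro m _
            rw [Matrix.mul_apply, Finset.mul_sum]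
        _ = ∑ m ∈ Finset.range κ, σp (m + 1) c * Aiter q A (m + 1) r i := by
            apply Finset.sum_congr rfl
            intro m _
            rw [Aiter_succ' hq, map_ratSubst_eq hq]
    rw [hL, hR, sum_shift (fun m => σp m c * Aiter q A m r i) κ]
    rw [hσpκ, hσp0, hAκ]
    show c * (1 : Matrix (Fin μ) (Fin μ) (RatFunc K)) r i = c * Aiter q A 0 r i
    rfl

end QAux5

variable [NumberField K]

/-- The normalized `v`-adic absolute value on the number field `K`, with
`|p|_v = p^{-[K_v:ℚ_p]/[K:ℚ]}`. -/
def vAbs (v : IsDedekindDomain.HeightOneSpectrum (𝓞 K)) (x : K) : ℝ :=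
  if h : x = 0 then 0
  else (Ideal.absNorm v.asIdeal : ℝ) ^
    (((Multiplicative.toAdd (WithZero.unzero ((v.valuation K).ne_zero_iff.mpr h)) : ℤ) : ℝ) /
      (Module.finrank ℚ K : ℝ))

/-- The `v`-adic Gauss norm of a polynomial: sup of the `v`-adic absolute values
of its coefficients. -/
def polyGaussNorm (v : IsDedekindDomain.HeightOneSpectrum (𝓞 K)) (P : Polynomial K) : ℝ :=
  ⨆ i : ℕ, vAbs v (P.coeff i)

/-- The `v`-adic Gauss norm of a rational function. -/
def gaussNorm (v : IsDedekindDomain.HeightOneSpectrum (𝓞 K)) (f : RatFunc K) : ℝ :=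
  polyGaussNorm v f.num / polyGaussNorm v f.denom

/-- The `v`-adic Gauss norm of a matrix of rational functions: the max of the Gauss norms
of its entries. -/
def matGaussNorm {μ : ℕ} (v : IsDedekindDomain.HeightOneSpectrum (𝓞 K))
    (M : Matrix (Fin μ) (Fin μ) (RatFunc K)) : ℝ :=
  ⨆ i, ⨆ j, gaussNorm v (M i j)

namespace QAux2

lemma vAbs_zero (v : IsDedekindDomain.HeightOneSpectrum (𝓞 K)) : vAbs v (0 : K) = 0 :=
  dif_pos rfl

lemma vAbs_val_one {v : IsDedekindDomain.HeightOneSpectrum (𝓞 K)} {x : K} (hx : x ≠ 0)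
    (h : v.valuation K x = 1) : vAbs v x = 1 := by
  rw [vAbs, dif_neg hx]
  have h1 : WithZero.unzero ((v.valuation K).ne_zero_iff.mpr hx) = 1 := by
    have h2 := WithZero.coe_unzero ((v.valuation K).ne_zero_iff.mpr hx)
    have h3 : (WithZero.unzero ((v.valuation K).ne_zero_iff.mpr hx) : Multiplicative ℤ) = (1 : WithZero (Multiplicative ℤ)) := by
      rw [h2, h]
    rwa [show (1 : WithZero (Multiplicative ℤ)) = ((1 : Multiplicative ℤ) : WithZero (Multiplicative ℤ)) from rfl, WithZero.coe_inj] at h3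
  rw [h1]
  simp

lemma vAbs_nonneg (v : IsDedekindDomain.HeightOneSpectrum (𝓞 K)) (x : K) : 0 ≤ vAbs v x := by
  rw [vAbs]
  split_ifs
  · exact le_rfl
  · exact Real.rpow_nonneg (by positivity) _

lemma finite_setOf_valuation_ne_one (a : K) (ha : a ≠ 0) :
    {v : IsDedekindDomain.HeightOneSpectrum (𝓞 K) | v.valuation K a ≠ 1}.Finite := by
  obtain ⟨x, y, hy, rfl⟩ := IsFractionRing.div_surjective (A := 𝓞 K) a
  have hy0 : (y : 𝓞 K) ≠ 0 := nonZeroDivisors.coe_ne_zero ⟨y, hy⟩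
  have hx0 : x ≠ 0 := by rintro rfl; simp at ha
  refine Set.Finite.subset ((Ideal.finite_factors (I := Ideal.span {x}) ?_).union
    (Ideal.finite_factors (I := Ideal.span {y}) ?_)) ?_
  · rw [Ne, Ideal.zero_eq_bot, Ideal.span_singleton_eq_bot]; exact hx0
  · rw [Ne, Ideal.zero_eq_bot, Ideal.span_singleton_eq_bot]; exact hy0
  · intro v hv
    simp only [Set.mem_setOf_eq] at hv
    by_contra hcon
    simp only [Set.mem_union, Set.mem_setOf_eq, not_or] at hcon
    have h1 : v.valuation K (algebraMap (𝓞 K) K x) = 1 :=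
      le_antisymm (v.valuation_le_one x) (not_lt.mp (fun hlt =>
        hcon.1 ((v.valuation_lt_one_iff_dvd x).mp hlt)))
    have h2 : v.valuation K (algebraMap (𝓞 K) K y) = 1 :=
      le_antisymm (v.valuation_le_one y) (not_lt.mp (fun hlt =>
        hcon.2 ((v.valuation_lt_one_iff_dvd y).mp hlt)))
    apply hv
    rw [map_div₀, h1, h2, div_one]

instance : Infinite (IsDedekindDomain.HeightOneSpectrum (𝓞 K)) := by
  have key : ∀ p : Nat.Primes, ∃ v : IsDedekindDomain.HeightOneSpectrum (𝓞 K),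
      ((p : ℕ) : 𝓞 K) ∈ v.asIdeal := by
    intro p
    have hnu : ¬ IsUnit ((p : ℕ) : 𝓞 K) := by
      intro hu
      have h1 : IsUnit (Algebra.norm ℤ ((p : ℕ) : 𝓞 K)) := hu.map (Algebra.norm ℤ)
      set b := Module.Free.chooseBasis ℤ (𝓞 K)
      rw [show ((p : ℕ) : 𝓞 K) = algebraMap ℤ (𝓞 K) ((p : ℕ) : ℤ) by push_cast; rfl,
        Algebra.norm_algebraMap_of_basis b, Int.isUnit_iff] at h1
      have hge : 2 ≤ ((p : ℕ) : ℤ) := by exact_mod_cast p.2.two_le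
      have hd : 0 < Fintype.card (Module.Free.ChooseBasisIndex ℤ (𝓞 K)) :=
        Fintype.card_pos_iff.mpr b.index_nonempty
      have h2 : 1 < ((p : ℕ) : ℤ) ^ Fintype.card (Module.Free.ChooseBasisIndex ℤ (𝓞 K)) :=
        one_lt_pow₀ (by linarith) hd.ne'
      rcases h1 with h1 | h1 <;> omega
    obtain ⟨M, hM, hle⟩ := Ideal.exists_le_maximal (Ideal.span {((p : ℕ) : 𝓞 K)})
      (fun h => hnu (Ideal.span_singleton_eq_top.mp h))
    refine ⟨⟨M, hM.isPrime, ?_⟩, hle (Ideal.mem_span_singleton_self _)⟩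
    rintro rfl
    have : ((p : ℕ) : 𝓞 K) = 0 := by
      simpa using hle (Ideal.mem_span_singleton_self ((p : ℕ) : 𝓞 K))
    exact p.2.ne_zero (by exact_mod_cast this)
  choose f hf using key
  refine Infinite.of_injective f (fun p p' h => ?_)
  by_contra hne
  have hcop : IsCoprime ((p : ℕ) : 𝓞 K) ((p' : ℕ) : 𝓞 K) := by
    have : IsCoprime ((p : ℕ) : ℤ) ((p' : ℕ) : ℤ) := by
      rw [Int.isCoprime_iff_gcd_eq_one]
      exact_mod_cast (Nat.coprime_primes p.2 p'.2).mpr (fun hpq => hne (Subtype.ext hpq))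
    have := this.map (algebraMap ℤ (𝓞 K))
    simpa using this
  obtain ⟨a, b, hab⟩ := hcop
  have h1 : (1 : 𝓞 K) ∈ (f p).asIdeal := by
    rw [← hab]
    exact Ideal.add_mem _ (Ideal.mul_mem_left _ _ (hf p))
      (Ideal.mul_mem_left _ _ (h ▸ hf p'))
  exact (f p).isPrime.ne_top (Ideal.eq_top_of_isUnit_mem _ h1 isUnit_one)

end QAux2

namespace QAux3

variable {v : IsDedekindDomain.HeightOneSpectrum (𝓞 K)}

lemma polyGaussNorm_zero (v : IsDedekindDomain.HeightOneSpectrum (𝓞 K)) :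
    polyGaussNorm v (0 : Polynomial K) = 0 := by
  simp only [polyGaussNorm, Polynomial.coeff_zero, QAux2.vAbs_zero]
  exact ciSup_const

lemma polyGaussNorm_good {P : Polynomial K} (hP : P ≠ 0)
    (h : ∀ i, P.coeff i = 0 ∨ v.valuation K (P.coeff i) = 1) :
    polyGaussNorm v P = 1 := by
  have hb : ∀ i, vAbs v (P.coeff i) ≤ 1 := by
    intro i
    rcases h i with h0 | h1
    · rw [h0, QAux2.vAbs_zero]; norm_num
    · have hx : P.coeff i ≠ 0 := by
        intro h0; rw [h0, map_zero] at h1; exact zero_ne_one h1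
      rw [QAux2.vAbs_val_one hx h1]
  have hba : BddAbove (Set.range fun i => vAbs v (P.coeff i)) :=
    ⟨1, by rintro r ⟨i, rfl⟩; exact hb i⟩
  refine le_antisymm (ciSup_le hb) ?_
  have hc : P.coeff P.natDegree ≠ 0 := by
    simpa [Polynomial.coeff_natDegree] using Polynomial.leadingCoeff_ne_zero.mpr hP
  have h1 : vAbs v (P.coeff P.natDegree) = 1 :=
    QAux2.vAbs_val_one hc ((h _).resolve_left hc)
  calc (1:ℝ) = vAbs v (P.coeff P.natDegree) := h1.symm
    _ ≤ ⨆ i, vAbs v (P.coeff i) := le_ciSup hba _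

lemma polyGaussNorm_one (v : IsDedekindDomain.HeightOneSpectrum (𝓞 K)) :
    polyGaussNorm v (1 : Polynomial K) = 1 := by
  refine polyGaussNorm_good one_ne_zero (fun i => ?_)
  rcases Nat.eq_zero_or_pos i with rfl | hi
  · right; rw [Polynomial.coeff_one_zero, map_one]
  · left; rw [Polynomial.coeff_one, if_neg (by omega)]

lemma gaussNorm_zero (v : IsDedekindDomain.HeightOneSpectrum (𝓞 K)) :
    gaussNorm v (0 : RatFunc K) = 0 := by
  rw [gaussNorm, RatFunc.num_zero, polyGaussNorm_zero, zero_div]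

lemma gaussNorm_good {f : RatFunc K} (hf : f ≠ 0)
    (hnum : ∀ i, f.num.coeff i = 0 ∨ v.valuation K (f.num.coeff i) = 1)
    (hden : ∀ i, f.denom.coeff i = 0 ∨ v.valuation K (f.denom.coeff i) = 1) :
    gaussNorm v f = 1 := by
  rw [gaussNorm, polyGaussNorm_good (RatFunc.num_ne_zero hf) hnum,
    polyGaussNorm_good (RatFunc.denom_ne_zero f) hden, div_one]

lemma matGaussNorm_zero_mat {μ : ℕ} (hμ : 1 ≤ μ) (v : IsDedekindDomain.HeightOneSpectrum (𝓞 K)) :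
    matGaussNorm v (0 : Matrix (Fin μ) (Fin μ) (RatFunc K)) = 0 := by
  have : Nonempty (Fin μ) := ⟨⟨0, hμ⟩⟩
  simp only [matGaussNorm, Matrix.zero_apply, gaussNorm_zero]
  have h0 : (⨆ _ : Fin μ, (0:ℝ)) = 0 := ciSup_const
  simp only [h0]

lemma le_matGaussNorm {μ : ℕ} (v : IsDedekindDomain.HeightOneSpectrum (𝓞 K))
    (M : Matrix (Fin μ) (Fin μ) (RatFunc K)) (i j : Fin μ) :
    gaussNorm v (M i j) ≤ matGaussNorm v M := by
  have h1 : gaussNorm v (M i j) ≤ ⨆ j', gaussNorm v (M i j') :=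
    le_ciSup (f := fun j' => gaussNorm v (M i j')) (Set.finite_range _).bddAbove j
  exact h1.trans (le_ciSup (f := fun i' => ⨆ j', gaussNorm v (M i' j'))
    (Set.finite_range _).bddAbove i)

lemma finite_setOf_matGaussNorm_lt_one {μ : ℕ} {M : Matrix (Fin μ) (Fin μ) (RatFunc K)}
    (hM : M ≠ 0) :
    {v : IsDedekindDomain.HeightOneSpectrum (𝓞 K) | matGaussNorm v M < 1}.Finite := by
  obtain ⟨i, j, hij⟩ : ∃ i j, M i j ≠ 0 := by
    by_contra h
    push_neg at h
    exact hM (by ext i j; simp [h])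
  set f := M i j with hf
  set T : Finset K := f.num.coeffs ∪ f.denom.coeffs with hT
  have hTne : ∀ c ∈ T, c ≠ 0 := by
    intro c hc
    rw [hT, Finset.mem_union] at hc
    rcases hc with hc | hc <;>
      · rw [Polynomial.mem_coeffs_iff] at hc
        obtain ⟨n, hn, rfl⟩ := hc
        exact Polynomial.mem_support_iff.mp hn
  refine Set.Finite.subset (Set.Finite.biUnion T.finite_toSet
    (fun c hc => QAux2.finite_setOf_valuation_ne_one c (hTne c hc))) ?_
  intro v hv
  simp only [Set.mem_setOf_eq] at hv
  by_contra hvT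
  simp only [Set.mem_iUnion, Set.mem_setOf_eq, not_exists, not_not] at hvT
  have hgood : ∀ (P : Polynomial K), P.coeffs ⊆ T →
      ∀ n, P.coeff n = 0 ∨ v.valuation K (P.coeff n) = 1 := by
    intro P hPT n
    by_cases h0 : P.coeff n = 0
    · exact Or.inl h0
    · exact Or.inr (hvT _ (hPT (Polynomial.coeff_mem_coeffs h0)))
  have h1 : gaussNorm v f = 1 :=
    gaussNorm_good hij
      (hgood _ (by rw [hT]; exact Finset.subset_union_left) )
      (hgood _ (by rw [hT]; exact Finset.subset_union_right) )
  have h2 := le_matGaussNorm v M i j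
  rw [← hf, h1] at h2
  exact absurd (lt_of_le_of_lt h2 hv) (lt_irrefl 1)

end QAux3

/-- For `q` a primitive root of unity of order `κ` in a number field `K`, the
`q`-difference module with matrix `A` is trivial over `K(x)` if and only if
`|A_κ(x) - 1|_{v,Gauss} < 1` for infinitely many finite places `v`. -/
theorem q_root_of_unity_trivial_iff_trivial_reduction_infinitely_many_places
    {K : Type*} [Field K] [NumberField K]
    (q : K) (κ : ℕ) (hκpos : 0 < κ)
    (hqκ : q ^ κ = 1) (hqmin : ∀ m : ℕ, 0 < m → m < κ → q ^ m ≠ 1)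
    (μ : ℕ) (hμ : 1 ≤ μ)
    (A : Matrix (Fin μ) (Fin μ) (RatFunc K)) (hA : IsUnit A) :
    (∃ F : Matrix (Fin μ) (Fin μ) (RatFunc K),
        IsUnit F ∧ F = A * F.map (ratSubst q)) ↔
      {v : IsDedekindDomain.HeightOneSpectrum (𝓞 K) |
        matGaussNorm v (Aiter q A κ - 1) < 1}.Infinite := by
  have hq : q ≠ 0 := by
    intro h
    rw [h, zero_pow hκpos.ne'] at hqκ
    exact zero_ne_one hqκ
  constructor
  · rintro ⟨F, hFu, hFeq⟩
    have hAκ : Aiter q A κ = 1 := QAux4.Aiter_eq_one_of_triv hq hqκ hFu hFeq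
    have hset : {v : IsDedekindDomain.HeightOneSpectrum (𝓞 K) |
        matGaussNorm v (Aiter q A κ - 1) < 1} = Set.univ := by
      ext v
      simp only [Set.mem_setOf_eq, Set.mem_univ, iff_true]
      rw [hAκ, sub_self, QAux3.matGaussNorm_zero_mat hμ]
      norm_num
    rw [hset]
    exact Set.infinite_univ
  · intro hinf
    have hAκ : Aiter q A κ = 1 := by
      by_contra hne
      have hM : Aiter q A κ - 1 ≠ 0 := fun h => hne (by rwa [sub_eq_zero] at h)
      exact hinf (QAux3.finite_setOf_matGaussNorm_lt_one hM)
    exact QAux5.exists_F κ hκpos hq hqκ hqmin A hAκ
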